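/- If f : ℝ^d → [0,∞) is measurable, not a.e. zero, and integrable with ∫ f(w)|v−w|^{γ+2} dw < ∞, then the Landau diffusion matrix A[f](v) = ∫ Π(v−w)|v−w|^{γ+2} f(w) dw is symmetric positive semidefinite; and it is positive definite provided f is positive on a set of positive measure not contained in any line through v. -/

import Mathlib

open MeasureTheory Classical

/-- The projection kernel of the Landau operator, with Π(0) = 0. -/

noncomputable def landauProj (u : EuclideanSpace ℝ (Fin 3)) :
    Matrix (Fin 3) (Fin 3) ℝ :=
  if u = 0 then 0
  else Matrix.of fun i j => (if i = j then (1 : ℝ) else 0) - u i * u j / ‖u‖ ^ 2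

section aux

local notation "E3" => EuclideanSpace ℝ (Fin 3)

lemma landau_inner_coords (u y : E3) : (inner ℝ u y : ℝ) = ∑ i, u i * y i := by
  simp [PiLp.inner_apply, RCLike.inner_apply, starRingEnd_apply, mul_comm]

lemma landau_normsq_coords (y : E3) : ‖y‖ ^ 2 = ∑ i, y i ^ 2 := by
  rw [← real_inner_self_eq_norm_sq, landau_inner_coords]; simp [sq]

lemma landau_coord_sq_le (u : E3) (i : Fin 3) : u i ^ 2 ≤ ‖u‖ ^ 2 := by
  rw [landau_normsq_coords]
  exact Finset.single_le_sum (f := fun j => u j ^ 2)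
    (fun _ _ => sq_nonneg _) (Finset.mem_univ i)

lemma landauProj_abs_le (u : E3) (i j : Fin 3) : |landauProj u i j| ≤ 2 := by
  unfold landauProj
  by_cases h : u = 0
  · simp [h]
  · simp only [if_neg h, Matrix.of_apply]
    have h1 := landau_coord_sq_le u i
    have h2 := landau_coord_sq_le u j
    have hn : (0:ℝ) < ‖u‖ ^ 2 := by
      have := norm_pos_iff.mpr h; positivity
    have key : |u i * u j / ‖u‖ ^ 2| ≤ 1 := by
      rw [abs_div, abs_of_pos hn, div_le_one hn, abs_mul]
      nlinarith [abs_nonneg (u i), abs_nonneg (u j), sq_abs (u i), sq_abs (u j)]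
    have h3 : |(if i = j then (1:ℝ) else 0)| ≤ 1 := by split <;> simp
    calc |(if i = j then (1:ℝ) else 0) - u i * u j / ‖u‖ ^ 2|
        ≤ |(if i = j then (1:ℝ) else 0)| + |u i * u j / ‖u‖ ^ 2| := abs_sub _ _
      _ ≤ 1 + 1 := add_le_add h3 key
      _ = 2 := by norm_num

lemma landauProj_symm (u : E3) (i j : Fin 3) : landauProj u j i = landauProj u i j := by
  unfold landauProj
  split
  · rfl
  · simp only [Matrix.of_apply]
    rw [mul_comm (u j) (u i)]
    congr 1
    simp [eq_comm]

lemma landauProj_measurable (v : E3) (i j : Fin 3) :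
    Measurable fun w : E3 => landauProj (v - w) i j := by
  have hs : MeasurableSet {w : E3 | v - w = 0} := by
    have : {w : E3 | v - w = 0} = {v} := by
      ext w; simp [sub_eq_zero, eq_comm]
    rw [this]; exact measurableSet_singleton v
  have hc : ∀ k : Fin 3, Measurable fun w : E3 => (v - w) k := fun k =>
    ((EuclideanSpace.proj k : E3 →L[ℝ] ℝ).continuous.comp
      (continuous_const.sub continuous_id)).measurable
  have hn : Measurable fun w : E3 => ‖v - w‖ :=
    (continuous_const.sub continuous_id).norm.measurable
  have : (fun w : E3 => landauProj (v - w) i j) =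
      fun w => if w ∈ {w : E3 | v - w = 0} then (0:ℝ)
        else (if i = j then (1:ℝ) else 0) - (v - w) i * (v - w) j / ‖v - w‖ ^ 2 := by
    funext w
    by_cases h : v - w = 0 <;> simp [landauProj, h, Set.mem_setOf_eq]
  rw [this]
  exact Measurable.ite hs measurable_const
    (measurable_const.sub (((hc i).mul (hc j)).div (hn.pow_const 2)))

/-- key algebraic identity for the quadratic form -/
lemma landau_key (u x : Fin 3 → ℝ) (n c d : ℝ) (hn : n ≠ 0) :
    ∑ i, ∑ j, x i * x j * (((if i = j then (1:ℝ) else 0) - u i * u j / n) * c * d)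
      = ((∑ i, x i ^ 2) - (∑ i, u i * x i) ^ 2 / n) * c * d := by
  simp only [Fin.sum_univ_three]
  norm_num [Fin.ext_iff]
  field_simp
  ring

end aux

/-- The Landau diffusion matrix A[f](v) = ∫ Π(v−w)‖v−w‖^{γ+2} f(w) dw is
symmetric positive semidefinite, and positive definite if f is positive on a
set of positive measure not contained in any line through v. -/
theorem landau_diffusion_matrix (γ : ℝ) (hγ : γ ∈ Set.Icc (-3 : ℝ) 1)
    (f : EuclideanSpace ℝ (Fin 3) → ℝ)
    (hmeas : Measurable f) (hpos : ∀ w, 0 ≤ f w)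
    (hne : ¬ (∀ᵐ w : EuclideanSpace ℝ (Fin 3), f w = 0))
    (v : EuclideanSpace ℝ (Fin 3))
    (hint : Integrable fun w : EuclideanSpace ℝ (Fin 3) =>
      ‖v - w‖ ^ (γ + 2) * f w)
    (A : Matrix (Fin 3) (Fin 3) ℝ)
    (hA : ∀ i j, A i j = ∫ w : EuclideanSpace ℝ (Fin 3),
      landauProj (v - w) i j * ‖v - w‖ ^ (γ + 2) * f w) :
    A.IsSymm ∧ A.PosSemidef ∧
    ((∃ S : Set (EuclideanSpace ℝ (Fin 3)), MeasurableSet S ∧ 0 < volume S ∧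
        (∀ w ∈ S, 0 < f w) ∧
        ∀ u : EuclideanSpace ℝ (Fin 3), u ≠ 0 →
          ¬ S ⊆ {w | ∃ c : ℝ, w = v + c • u}) → A.PosDef) := by
  have hrpos : ∀ w : EuclideanSpace ℝ (Fin 3), 0 ≤ ‖v - w‖ ^ (γ + 2) :=
    fun w => Real.rpow_nonneg (norm_nonneg _) _
  have hrm : Measurable fun w : EuclideanSpace ℝ (Fin 3) => ‖v - w‖ ^ (γ + 2) := by
    have h1 : Measurable fun w : EuclideanSpace ℝ (Fin 3) => ‖v - w‖ :=
      (continuous_const.sub continuous_id).norm.measurable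
    have h2 : Measurable fun t : ℝ => t ^ (γ + 2) := by fun_prop
    exact h2.comp h1
  -- integrability of each matrix-entry integrand
  have hg : ∀ i j, Integrable
      (fun w : EuclideanSpace ℝ (Fin 3) =>
        landauProj (v - w) i j * ‖v - w‖ ^ (γ + 2) * f w) := by
    intro i j
    refine Integrable.mono' (hint.const_mul 2)
      ((((landauProj_measurable v i j).mul hrm).mul hmeas).aestronglyMeasurable)
      (ae_of_all _ fun w => ?_)
    rw [Real.norm_eq_abs, abs_mul, abs_mul,
      abs_of_nonneg (hrpos w), abs_of_nonneg (hpos w)]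
    have := landauProj_abs_le (v - w) i j
    have h1 : |landauProj (v - w) i j| * ‖v - w‖ ^ (γ + 2) ≤ 2 * ‖v - w‖ ^ (γ + 2) :=
      mul_le_mul_of_nonneg_right this (hrpos w)
    calc |landauProj (v - w) i j| * ‖v - w‖ ^ (γ + 2) * f w
        ≤ 2 * ‖v - w‖ ^ (γ + 2) * f w := mul_le_mul_of_nonneg_right h1 (hpos w)
      _ = 2 * (‖v - w‖ ^ (γ + 2) * f w) := by ring
  -- symmetry
  have hsymm : A.IsSymm := by
    refine Matrix.IsSymm.ext fun i j => ?_
    rw [hA, hA]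
    exact congrArg (integral volume) (funext fun w => by rw [landauProj_symm])
  have hherm : A.IsHermitian := by
    rw [Matrix.IsHermitian, Matrix.conjTranspose_eq_transpose_of_trivial]
    exact hsymm
  -- the quadratic form as an integral
  set Q : (Fin 3 → ℝ) → EuclideanSpace ℝ (Fin 3) → ℝ := fun x w =>
    (if v - w = 0 then 0
      else (∑ i, x i ^ 2) - (∑ i, (v - w) i * x i) ^ 2 / ‖v - w‖ ^ 2)
      * ‖v - w‖ ^ (γ + 2) * f w with hQdef
  have keyid : ∀ (x : Fin 3 → ℝ) (w : EuclideanSpace ℝ (Fin 3)),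
      ∑ i, ∑ j, x i * x j * (landauProj (v - w) i j * ‖v - w‖ ^ (γ + 2) * f w)
        = Q x w := by
    intro x w
    by_cases h : v - w = 0
    · simp [hQdef, landauProj, h]
    · have hn : (‖v - w‖ : ℝ) ^ 2 ≠ 0 :=
        pow_ne_zero 2 (norm_ne_zero_iff.mpr h)
      simp only [hQdef, landauProj, if_neg h, Matrix.of_apply]
      exact landau_key (fun i => (v - w) i) x _ _ _ hn
  have hT : ∀ (x : Fin 3 → ℝ) (i j : Fin 3), Integrable
      (fun w : EuclideanSpace ℝ (Fin 3) =>
        x i * x j * (landauProj (v - w) i j * ‖v - w‖ ^ (γ + 2) * f w)) :=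
    fun x i j => (hg i j).const_mul (x i * x j)
  have hQint : ∀ x : Fin 3 → ℝ, Integrable (Q x) := by
    intro x
    have h1 : Integrable (fun w : EuclideanSpace ℝ (Fin 3) =>
        ∑ i : Fin 3, ∑ j : Fin 3,
          x i * x j * (landauProj (v - w) i j * ‖v - w‖ ^ (γ + 2) * f w)) :=
      integrable_finset_sum Finset.univ fun i _ =>
        integrable_finset_sum Finset.univ fun j _ => hT x i j
    exact h1.congr (ae_of_all _ (keyid x))
  have hquad : ∀ x : Fin 3 → ℝ, dotProduct (star x) (A.mulVec x) = ∫ w, Q x w := by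
    intro x
    have step1 : dotProduct (star x) (A.mulVec x) = ∑ i, ∑ j, x i * x j * A i j := by
      simp only [dotProduct, Matrix.mulVec, Pi.star_apply, star_trivial,
        Finset.mul_sum]
      exact Finset.sum_congr rfl fun i _ => Finset.sum_congr rfl fun j _ => by ring
    have step2 : ∀ i j, x i * x j * A i j = ∫ w,
        x i * x j * (landauProj (v - w) i j * ‖v - w‖ ^ (γ + 2) * f w) := by
      intro i j
      rw [hA]
      exact (integral_const_mul _ _).symm
    rw [step1]
    calc ∑ i, ∑ j, x i * x j * A i j
        = ∑ i, ∑ j, ∫ w,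
            x i * x j * (landauProj (v - w) i j * ‖v - w‖ ^ (γ + 2) * f w) :=
          Finset.sum_congr rfl fun i _ => Finset.sum_congr rfl fun j _ => step2 i j
      _ = ∑ i, ∫ w, ∑ j,
            x i * x j * (landauProj (v - w) i j * ‖v - w‖ ^ (γ + 2) * f w) :=
          Finset.sum_congr rfl fun i _ =>
            (integral_finset_sum _ fun j _ => hT x i j).symm
      _ = ∫ w, ∑ i, ∑ j,
            x i * x j * (landauProj (v - w) i j * ‖v - w‖ ^ (γ + 2) * f w) :=
          (integral_finset_sum _ fun i _ =>
            integrable_finset_sum _ fun j _ => hT x i j).symm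
      _ = ∫ w, Q x w := congrArg (integral volume) (funext fun w => keyid x w)
  -- pointwise nonnegativity of Q
  have hQ0 : ∀ (x : Fin 3 → ℝ) (w : EuclideanSpace ℝ (Fin 3)), 0 ≤ Q x w := by
    intro x w
    refine mul_nonneg (mul_nonneg ?_ (hrpos w)) (hpos w)
    by_cases h : v - w = 0
    · simp [h]
    · rw [if_neg h]
      have hn : (0:ℝ) < ‖v - w‖ ^ 2 := by
        have := norm_pos_iff.mpr h; positivity
      rw [sub_nonneg, div_le_iff₀ hn]
      calc (∑ i, (v - w) i * x i) ^ 2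
          ≤ (∑ i, (v - w) i ^ 2) * ∑ i, x i ^ 2 :=
            Finset.sum_mul_sq_le_sq_mul_sq _ _ _
        _ = (∑ i, x i ^ 2) * ‖v - w‖ ^ 2 := by
            rw [landau_normsq_coords]; ring
  have hpsd : A.PosSemidef := by
    refine Matrix.posSemidef_iff_dotProduct_mulVec.mpr ⟨hherm, fun x => ?_⟩
    rw [hquad x]
    exact integral_nonneg (hQ0 x)
  refine ⟨hsymm, hpsd, ?_⟩
  -- positive definiteness
  rintro ⟨S, hSm, hS0, hSf, -⟩
  refine Matrix.posDef_iff_dotProduct_mulVec.mpr ⟨hherm, fun x hx => ?_⟩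
  rw [hquad x]
  rw [integral_pos_iff_support_of_nonneg (hQ0 x) (hQint x)]
  -- the vector x as a point of Euclidean space
  set x' : EuclideanSpace ℝ (Fin 3) := (WithLp.equiv 2 (Fin 3 → ℝ)).symm x with hx'def
  have hx' : x' ≠ 0 := by
    intro h
    apply hx
    funext i
    exact congrFun (congrArg (WithLp.equiv 2 (Fin 3 → ℝ)) h) i
  set L : Set (EuclideanSpace ℝ (Fin 3)) := {w | ∃ c : ℝ, w = v + c • x'} with hLdef
  have hL0 : volume L = 0 := by
    have hLeq : L = (AffineSubspace.mk' v (Submodule.span ℝ {x'}) :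
        Set (EuclideanSpace ℝ (Fin 3))) := by
      ext w
      simp only [hLdef, Set.mem_setOf_eq, SetLike.mem_coe,
        AffineSubspace.mem_mk', Submodule.mem_span_singleton]
      constructor
      · rintro ⟨c, rfl⟩
        exact ⟨c, by rw [vsub_eq_sub, add_sub_cancel_left]⟩
      · rintro ⟨c, hc⟩
        exact ⟨c, by rw [hc, vsub_eq_sub]; abel⟩
    have hnetop : AffineSubspace.mk' v (Submodule.span ℝ {x'}) ≠ ⊤ := by
      intro h
      have hdir : Submodule.span ℝ {x'} = ⊤ := by
        have := AffineSubspace.direction_mk' v (Submodule.span ℝ {x'})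
        rw [h] at this
        rw [← this, AffineSubspace.direction_top]
      have h1 : Module.finrank ℝ (Submodule.span ℝ {x'}) = 1 :=
        finrank_span_singleton hx'
      rw [hdir, finrank_top] at h1
      have h3 : Module.finrank ℝ (EuclideanSpace ℝ (Fin 3)) = 3 :=
        finrank_euclideanSpace_fin
      omega
    rw [hLeq]
    exact Measure.addHaar_affineSubspace volume _ hnetop
  have hsub : S \ L ⊆ Function.support (Q x) := by
    rintro w ⟨hwS, hwL⟩
    have hfw := hSf w hwS
    have hwv : v - w ≠ 0 := by
      intro h
      exact hwL ⟨0, by rw [zero_smul, add_zero, ← sub_eq_zero, ← neg_sub v w, h, neg_zero]⟩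
    have hnormpos : (0:ℝ) < ‖v - w‖ := norm_pos_iff.mpr hwv
    have hn : (0:ℝ) < ‖v - w‖ ^ 2 := by positivity
    -- strict Cauchy–Schwarz
    have hCS : (∑ i, (v - w) i * x i) ^ 2 ≤ ‖v - w‖ ^ 2 * ∑ i, x i ^ 2 := by
      calc (∑ i, (v - w) i * x i) ^ 2
          ≤ (∑ i, (v - w) i ^ 2) * ∑ i, x i ^ 2 :=
            Finset.sum_mul_sq_le_sq_mul_sq _ _ _
        _ = ‖v - w‖ ^ 2 * ∑ i, x i ^ 2 := by rw [landau_normsq_coords]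
    have hstrict : (∑ i, (v - w) i * x i) ^ 2 < ‖v - w‖ ^ 2 * ∑ i, x i ^ 2 := by
      rcases lt_or_eq_of_le hCS with h | h
      · exact h
      · exfalso
        have hinner : (inner ℝ (v - w) x' : ℝ) = ∑ i, (v - w) i * x i := by
          rw [landau_inner_coords]; rfl
        have hxnorm : ‖x'‖ ^ 2 = ∑ i, x i ^ 2 := landau_normsq_coords x'
        have hsq : (inner ℝ (v - w) x' : ℝ) ^ 2 = (‖v - w‖ * ‖x'‖) ^ 2 := by
          rw [hinner, mul_pow, hxnorm]; exact h
        have habs : |(inner ℝ (v - w) x' : ℝ)| = ‖v - w‖ * ‖x'‖ := by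
          rcases sq_eq_sq_iff_eq_or_eq_neg.mp hsq with h' | h'
          · rw [h']; exact abs_of_nonneg (by positivity)
          · rw [h', abs_neg]; exact abs_of_nonneg (by positivity)
        have hxnormpos : (0:ℝ) < ‖x'‖ := norm_pos_iff.mpr hx'
        have hdiv : |(inner ℝ (v - w) x' : ℝ) / (‖v - w‖ * ‖x'‖)| = 1 := by
          rw [abs_div, habs, abs_of_pos (by positivity), div_self (by positivity)]
        obtain ⟨-, r, hr0, hxr⟩ :=
          (abs_real_inner_div_norm_mul_norm_eq_one_iff (v - w) x').mp hdiv
        apply hwL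
        refine ⟨-r⁻¹, ?_⟩
        have hu : v - w = r⁻¹ • x' := by
          rw [hxr, smul_smul, inv_mul_cancel₀ hr0, one_smul]
        rw [neg_smul, ← hu]
        abel
    -- conclude Q x w > 0
    have hbr : 0 < (∑ i, x i ^ 2) - (∑ i, (v - w) i * x i) ^ 2 / ‖v - w‖ ^ 2 := by
      rw [sub_pos, div_lt_iff₀ hn]
      calc (∑ i, (v - w) i * x i) ^ 2
          < ‖v - w‖ ^ 2 * ∑ i, x i ^ 2 := hstrict
        _ = (∑ i, x i ^ 2) * ‖v - w‖ ^ 2 := by ring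
    have hrposw : (0:ℝ) < ‖v - w‖ ^ (γ + 2) :=
      Real.rpow_pos_of_pos hnormpos _
    have : 0 < Q x w := by
      rw [hQdef]
      simp only [if_neg hwv]
      positivity
    exact ne_of_gt this
  calc (0 : ENNReal) < volume S := hS0
    _ = volume (S \ L) := (measure_diff_null hL0).symm
    _ ≤ volume (Function.support (Q x)) := measure_mono hsub
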